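/- Let X be a Hausdorff locally compact topological space and let K : X×X → [0,+∞] be lower semicontinuous with K(·,ζ) not identically zero for each ζ∈X. Then for every compact set F⊆X there exists a nonnegative Radon measure μ supported in F with K∗μ(z) ≤ 1 for every z∈X and μ(F) = C_K(F); that is, the supremum defining C_K(F) is attained (by an equilibrium measure of F). -/

import Mathlib

open MeasureTheory Set
open scoped ENNReal NNReal

noncomputable section

/-- Capacity of `F` with respect to the kernel `K`: supremum of total masses of
nonnegative Radon measures supported in `F` whose `K`-potential is `≤ 1` on `X`. -/
def genCapac {X : Type*} [TopologicalSpace X] [MeasurableSpace X]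
    (K : X → X → ℝ≥0∞) (F : Set X) : ℝ≥0∞ :=
  ⨆ (μ : Measure X) (_ : μ.InnerRegular ∧ IsLocallyFiniteMeasure μ ∧ μ Fᶜ = 0 ∧
      ∀ z : X, ∫⁻ ζ, K z ζ ∂μ ≤ 1), μ F

namespace Stmt16Aux

open Filter Topology TopologicalSpace

/-- Limit of a sequence in `ℝ≥0∞` along an ultrafilter (always exists by compactness). -/
noncomputable def ulim (u : Ultrafilter ℕ) (f : ℕ → ℝ≥0∞) : ℝ≥0∞ :=
  (u.map f).lim

lemma tendsto_ulim (u : Ultrafilter ℕ) (f : ℕ → ℝ≥0∞) : Tendsto f ↑u (𝓝 (ulim u f)) :=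
  (u.map f).le_nhds_lim

lemma ulim_eq {u : Ultrafilter ℕ} {f : ℕ → ℝ≥0∞} {a : ℝ≥0∞} (h : Tendsto f ↑u (𝓝 a)) :
    ulim u f = a :=
  tendsto_nhds_unique (tendsto_ulim u f) h

lemma ulim_mono {u : Ultrafilter ℕ} {f g : ℕ → ℝ≥0∞} (h : ∀ n, f n ≤ g n) :
    ulim u f ≤ ulim u g :=
  le_of_tendsto_of_tendsto' (tendsto_ulim u f) (tendsto_ulim u g) h

lemma ulim_const {u : Ultrafilter ℕ} (c : ℝ≥0∞) : ulim u (fun _ => c) = c :=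
  ulim_eq tendsto_const_nhds

lemma ulim_le {u : Ultrafilter ℕ} {f : ℕ → ℝ≥0∞} {c : ℝ≥0∞} (h : ∀ n, f n ≤ c) :
    ulim u f ≤ c := by
  have := ulim_mono (u := u) (g := fun _ => c) h
  rwa [ulim_const] at this

lemma ulim_zero {u : Ultrafilter ℕ} {f : ℕ → ℝ≥0∞} (h : ∀ n, f n = 0) :
    ulim u f = 0 :=
  le_antisymm (ulim_le (fun n => (h n).le)) (zero_le)

variable {X : Type*} [TopologicalSpace X] [T2Space X] [MeasurableSpace X] [BorelSpace X]

/-- The dyadic lower staircase approximation of `g`, written as a finite sum of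
indicator functions of open superlevel sets. -/
noncomputable def dyadicSum (g : X → ℝ≥0∞) (m : ℕ) (x : X) : ℝ≥0∞ :=
  ∑ k ∈ Finset.Icc 1 (m * 2 ^ m),
    ({y | (k : ℝ≥0∞) * ((2 : ℝ≥0∞) ^ m)⁻¹ < g y}).indicator
      (fun _ => ((2 : ℝ≥0∞) ^ m)⁻¹) x

lemma two_pow_inv_ne_top (m : ℕ) : ((2 : ℝ≥0∞) ^ m)⁻¹ ≠ ∞ := by
  simp [ENNReal.inv_ne_top, pow_ne_zero]

lemma two_pow_inv_le_one (m : ℕ) : ((2 : ℝ≥0∞) ^ m)⁻¹ ≤ 1 := by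
  rw [ENNReal.inv_le_one]
  exact one_le_pow_of_one_le' one_le_two m

lemma two_pow_inv_coe (m : ℕ) :
    ((2 : ℝ≥0∞) ^ m)⁻¹ = (((2 : ℝ≥0) ^ m)⁻¹ : ℝ≥0) := by
  rw [ENNReal.coe_inv (by positivity)]
  simp

lemma measurable_superlevel {g : X → ℝ≥0∞} (hg : LowerSemicontinuous g) (a : ℝ≥0∞) :
    MeasurableSet {y | a < g y} :=
  (hg.isOpen_preimage a).measurableSet

lemma measurable_dyadicSum {g : X → ℝ≥0∞} (hg : LowerSemicontinuous g) (m : ℕ) :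
    Measurable (dyadicSum g m) := by
  apply Finset.measurable_sum
  intro k _
  exact measurable_const.indicator (measurable_superlevel hg _)

lemma lintegral_dyadicSum {g : X → ℝ≥0∞} (hg : LowerSemicontinuous g) (m : ℕ)
    (ν : Measure X) :
    ∫⁻ x, dyadicSum g m x ∂ν
      = ∑ k ∈ Finset.Icc 1 (m * 2 ^ m),
          ((2 : ℝ≥0∞) ^ m)⁻¹ * ν {y | (k : ℝ≥0∞) * ((2 : ℝ≥0∞) ^ m)⁻¹ < g y} := by
  simp only [dyadicSum]
  rw [lintegral_finset_sum _
    (fun k _ => measurable_const.indicator (measurable_superlevel hg _))]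
  exact Finset.sum_congr rfl fun k _ =>
    lintegral_indicator_const (measurable_superlevel hg _) _

/-- Key pointwise inequality: if `D k ⊆ {y | k·t < g y}` for `k = 1, …, N`, then
the sum of the `t`-scaled indicators of the `D k` is bounded by `g`. -/
lemma sum_indicator_le {g : X → ℝ≥0∞} {t : ℝ≥0∞} {N : ℕ} {D : ℕ → Set X}
    (hD : ∀ k ∈ Finset.Icc 1 N, D k ⊆ {y | (k : ℝ≥0∞) * t < g y}) (x : X) :
    ∑ k ∈ Finset.Icc 1 N, (D k).indicator (fun _ => t) x ≤ g x := by
  classical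
  set s : Finset ℕ := (Finset.Icc 1 N).filter (fun k => x ∈ D k) with hs_def
  have hsum : ∑ k ∈ Finset.Icc 1 N, (D k).indicator (fun _ => t) x = ∑ _k ∈ s, t := by
    rw [hs_def, Finset.sum_filter]
    exact Finset.sum_congr rfl fun k _ => by
      by_cases h : x ∈ D k <;> simp [Set.indicator_apply, h]
  rcases s.eq_empty_or_nonempty with hs | hs
  · simp [hsum, hs]
  · set M := s.max' hs with hM_def
    have hMs : M ∈ s := s.max'_mem hs
    have hx : x ∈ D M := (Finset.mem_filter.1 hMs).2
    have hMIcc : M ∈ Finset.Icc 1 N := (Finset.mem_filter.1 hMs).1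
    have hgx : (M : ℝ≥0∞) * t < g x := hD M hMIcc hx
    have hcard : s.card ≤ M := by
      have hsub : s ⊆ Finset.Icc 1 M := by
        intro k hk
        have h1 : k ∈ Finset.Icc 1 N := (Finset.mem_filter.1 hk).1
        exact Finset.mem_Icc.2 ⟨(Finset.mem_Icc.1 h1).1, s.le_max' k hk⟩
      calc s.card ≤ (Finset.Icc 1 M).card := Finset.card_le_card hsub
        _ = M := by rw [Nat.card_Icc]; omega
    calc ∑ k ∈ Finset.Icc 1 N, (D k).indicator (fun _ => t) x
        = (s.card : ℝ≥0∞) * t := by rw [hsum, Finset.sum_const, nsmul_eq_mul]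
      _ ≤ (M : ℝ≥0∞) * t := mul_le_mul_left (by exact_mod_cast hcard) t
      _ ≤ g x := hgx.le

/-- Pointwise, `g` is dominated by the `liminf` of its dyadic staircase sums. -/
lemma le_liminf_dyadicSum (g : X → ℝ≥0∞) (x : X) :
    g x ≤ Filter.liminf (fun m => dyadicSum g m x) Filter.atTop := by
  refine ENNReal.le_of_forall_nnreal_lt (fun q hq => ?_)
  obtain ⟨q', hq1, hq2⟩ := ENNReal.lt_iff_exists_nnreal_btwn.1 hq
  have hqq' : q < q' := by exact_mod_cast hq1
  obtain ⟨m₁, hm₁⟩ : ∃ m₁ : ℕ, (2 : ℝ≥0)⁻¹ ^ m₁ < q' - q :=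
    exists_pow_lt_of_lt_one (tsub_pos_of_lt hqq')
      (by rw [← NNReal.coe_lt_coe]; norm_num)
  set m₀ := max m₁ ⌈(q' : ℝ≥0)⌉₊ with hm₀_def
  have key : ∀ m, m₀ ≤ m → (q : ℝ≥0∞) ≤ dyadicSum g m x := by
    intro m hm
    set tR : ℝ≥0 := ((2 : ℝ≥0) ^ m)⁻¹ with htR_def
    have htR_pos : 0 < tR := by positivity
    have htm : tR ≤ q' - q := by
      have h1 : (2 : ℝ≥0)⁻¹ ^ m ≤ (2 : ℝ≥0)⁻¹ ^ m₁ :=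
        pow_le_pow_of_le_one (by positivity) (by norm_num) (le_trans (le_max_left _ _) hm)
      rw [htR_def, ← inv_pow]
      exact h1.trans hm₁.le
    set j : ℕ := ⌊(q' : ℝ≥0) * 2 ^ m⌋₊ with hj_def
    have hq'm : (q' : ℝ≥0) ≤ (m : ℝ≥0) := by
      calc (q' : ℝ≥0) ≤ (⌈(q' : ℝ≥0)⌉₊ : ℝ≥0) := Nat.le_ceil _
        _ ≤ (m : ℝ≥0) := by exact_mod_cast le_trans (le_max_right _ _) hm
    -- (i) j ≤ m * 2 ^ m
    have hjN : j ≤ m * 2 ^ m := by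
      have h1 : (q' : ℝ≥0) * 2 ^ m ≤ ((m * 2 ^ m : ℕ) : ℝ≥0) := by
        push_cast
        exact mul_le_mul_left hq'm _
      calc j ≤ ⌊((m * 2 ^ m : ℕ) : ℝ≥0)⌋₊ := Nat.floor_mono h1
        _ = m * 2 ^ m := Nat.floor_natCast _
    -- (ii) j * t ≤ q' in ℝ≥0
    have hjt_le : (j : ℝ≥0) * tR ≤ q' := by
      have h1 : (j : ℝ≥0) ≤ (q' : ℝ≥0) * 2 ^ m := Nat.floor_le (by positivity)
      calc (j : ℝ≥0) * tR ≤ ((q' : ℝ≥0) * 2 ^ m) * tR := mul_le_mul_left h1 _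
        _ = q' := by
            rw [htR_def, mul_assoc, mul_inv_cancel₀ (by positivity), mul_one]
    -- (iii) q ≤ j * t in ℝ≥0 (in fact q < j * t)
    have hq_le : (q : ℝ≥0) ≤ (j : ℝ≥0) * tR := by
      have h1 : (q' : ℝ≥0) < ((j : ℝ≥0) + 1) * tR := by
        have h2 : (q' : ℝ≥0) * 2 ^ m < (j : ℝ≥0) + 1 := Nat.lt_floor_add_one _
        calc (q' : ℝ≥0) = ((q' : ℝ≥0) * 2 ^ m) * tR := by
              rw [htR_def, mul_assoc, mul_inv_cancel₀ (by positivity), mul_one]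
          _ < ((j : ℝ≥0) + 1) * tR := by
              exact mul_lt_mul_of_pos_right h2 htR_pos
      have h3 : q + tR ≤ q' := by
        calc q + tR ≤ q + (q' - q) := add_le_add le_rfl htm
          _ = q' := by rw [add_tsub_cancel_of_le hqq'.le]
      have h4 : q + tR < (j : ℝ≥0) * tR + tR := by
        rw [add_one_mul] at h1
        exact lt_of_le_of_lt h3 h1
      exact (lt_of_add_lt_add_right h4).le
    -- conclude: dyadicSum ≥ j * t ≥ q
    have hsub : Finset.Icc 1 j ⊆ Finset.Icc 1 (m * 2 ^ m) :=
      Finset.Icc_subset_Icc_right hjN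
    have hterm : ∀ k ∈ Finset.Icc 1 j,
        ({y | (k : ℝ≥0∞) * ((2 : ℝ≥0∞) ^ m)⁻¹ < g y}).indicator
          (fun _ => ((2 : ℝ≥0∞) ^ m)⁻¹) x = ((2 : ℝ≥0∞) ^ m)⁻¹ := by
      intro k hk
      apply Set.indicator_of_mem
      show (k : ℝ≥0∞) * ((2 : ℝ≥0∞) ^ m)⁻¹ < g x
      have hk_le : (k : ℝ≥0∞) * ((2 : ℝ≥0∞) ^ m)⁻¹ ≤ (q' : ℝ≥0∞) := by
        rw [two_pow_inv_coe]
        have : (k : ℝ≥0) * tR ≤ q' := by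
          calc (k : ℝ≥0) * tR ≤ (j : ℝ≥0) * tR := by
                exact mul_le_mul_left (by exact_mod_cast (Finset.mem_Icc.1 hk).2) _
            _ ≤ q' := hjt_le
        calc (k : ℝ≥0∞) * ((((2 : ℝ≥0) ^ m)⁻¹ : ℝ≥0) : ℝ≥0∞)
            = (((k : ℝ≥0) * tR : ℝ≥0) : ℝ≥0∞) := by
              rw [htR_def]; push_cast; ring
          _ ≤ (q' : ℝ≥0∞) := by exact_mod_cast this
      exact lt_of_le_of_lt hk_le hq2
    have hge : ((j : ℝ≥0∞)) * ((2 : ℝ≥0∞) ^ m)⁻¹ ≤ dyadicSum g m x := by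
      calc ((j : ℝ≥0∞)) * ((2 : ℝ≥0∞) ^ m)⁻¹
          = ∑ _k ∈ Finset.Icc 1 j, ((2 : ℝ≥0∞) ^ m)⁻¹ := by
            rw [Finset.sum_const, nsmul_eq_mul, Nat.card_Icc]
            norm_num
        _ = ∑ k ∈ Finset.Icc 1 j,
              ({y | (k : ℝ≥0∞) * ((2 : ℝ≥0∞) ^ m)⁻¹ < g y}).indicator
                (fun _ => ((2 : ℝ≥0∞) ^ m)⁻¹) x :=
            (Finset.sum_congr rfl hterm).symm
        _ ≤ dyadicSum g m x := Finset.sum_le_sum_of_subset hsub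
    refine le_trans ?_ hge
    rw [two_pow_inv_coe]
    calc (q : ℝ≥0∞) ≤ (((j : ℝ≥0) * tR : ℝ≥0) : ℝ≥0∞) := by exact_mod_cast hq_le
      _ = (j : ℝ≥0∞) * ((((2 : ℝ≥0) ^ m)⁻¹ : ℝ≥0) : ℝ≥0∞) := by
          rw [htR_def]; push_cast; ring
  exact Filter.le_liminf_of_le (by isBoundedDefault)
    (Filter.eventually_atTop.2 ⟨m₀, key⟩)

/-- The main lower-semicontinuity estimate: if the potential of each `ν n` is at most `1`
and `μ` is, on open sets, the supremum of ultrafilter limits of `ν n` on compact subsets,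
then the potential of `μ` is at most `1`. -/
lemma potential_bound (μ : Measure X) [IsFiniteMeasure μ]
    (ν : ℕ → Measure X) (u : Ultrafilter ℕ)
    (hopen : ∀ U : Set X, IsOpen U →
      μ U = ⨆ (D : Compacts X) (_ : (D : Set X) ⊆ U), ulim u (fun n => ν n D))
    (g : X → ℝ≥0∞) (hg : LowerSemicontinuous g)
    (hgn : ∀ n, ∫⁻ x, g x ∂(ν n) ≤ 1) :
    ∫⁻ x, g x ∂μ ≤ 1 := by
  classical
  -- Step 1 : each dyadic approximation has `μ`-integral at most 1
  have step1 : ∀ m : ℕ, ∫⁻ x, dyadicSum g m x ∂μ ≤ 1 := by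
    intro m
    rw [lintegral_dyadicSum hg m μ]
    set t : ℝ≥0∞ := ((2 : ℝ≥0∞) ^ m)⁻¹ with ht_def
    set N : ℕ := m * 2 ^ m with hN_def
    rcases Nat.eq_zero_or_pos N with hN | hNpos
    · simp [hN]
    apply ENNReal.le_of_forall_pos_le_add
    intro ε hε _
    set δ : ℝ≥0∞ := (ε : ℝ≥0∞) / N with hδ_def
    have hδ0 : δ ≠ 0 := by
      rw [hδ_def]
      simp only [ne_eq, ENNReal.div_eq_zero_iff]
      push_neg
      exact ⟨by exact_mod_cast hε.ne', by simp⟩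
    -- choose, for each k, a compact set almost realizing the measure of the superlevel set
    have hex : ∀ k : ℕ, ∃ D : Compacts X, (D : Set X) ⊆ {y | (k : ℝ≥0∞) * t < g y} ∧
        μ {y | (k : ℝ≥0∞) * t < g y} ≤ ulim u (fun n => ν n D) + δ := by
      intro k
      set U : Set X := {y | (k : ℝ≥0∞) * t < g y} with hU_def
      have hUo : IsOpen U := hg.isOpen_preimage _
      by_cases h0 : μ U = 0
      · exact ⟨⊥, by simp, by simp [h0]⟩
      · have hlt : μ U - δ < μ U := ENNReal.sub_lt_self (measure_ne_top μ U) h0 hδ0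
        rw [hopen U hUo] at hlt
        obtain ⟨D, hD⟩ := lt_iSup_iff.1 hlt
        obtain ⟨hDsub, hD2⟩ := lt_iSup_iff.1 hD
        refine ⟨D, hDsub, ?_⟩
        rw [← hopen U hUo] at *
        exact tsub_le_iff_right.1 hD2.le
    choose D hD1 hD2 using hex
    -- each ν n satisfies the discrete bound
    have hn : ∀ n, ∑ k ∈ Finset.Icc 1 N, t * ν n (D k) ≤ 1 := by
      intro n
      have heq : ∑ k ∈ Finset.Icc 1 N, t * ν n (D k)
          = ∫⁻ x, ∑ k ∈ Finset.Icc 1 N, ((D k : Set X)).indicator (fun _ => t) x ∂(ν n) := by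
        calc ∑ k ∈ Finset.Icc 1 N, t * ν n (D k)
            = ∑ k ∈ Finset.Icc 1 N,
                ∫⁻ x, ((D k : Set X)).indicator (fun _ => t) x ∂(ν n) :=
              Finset.sum_congr rfl fun k _ =>
                (lintegral_indicator_const (D k).2.isClosed.measurableSet _).symm
          _ = ∫⁻ x, ∑ k ∈ Finset.Icc 1 N, ((D k : Set X)).indicator (fun _ => t) x ∂(ν n) :=
              (lintegral_finset_sum _ (fun k _ =>
                measurable_const.indicator (D k).2.isClosed.measurableSet)).symm
      rw [heq]
      refine le_trans (lintegral_mono ?_) (hgn n)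
      intro x
      exact sum_indicator_le (fun k hk => hD1 k) x
    -- pass to the ultrafilter limit
    have hlim : Filter.Tendsto (fun n => ∑ k ∈ Finset.Icc 1 N, t * ν n (D k)) ↑u
        (𝓝 (∑ k ∈ Finset.Icc 1 N, t * ulim u (fun n => ν n (D k)))) := by
      apply tendsto_finset_sum
      intro k _
      exact ENNReal.Tendsto.const_mul (tendsto_ulim u _) (Or.inr (two_pow_inv_ne_top m))
    have hsum1 : ∑ k ∈ Finset.Icc 1 N, t * ulim u (fun n => ν n (D k)) ≤ 1 :=
      le_of_tendsto hlim (Filter.Eventually.of_forall hn)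
    -- combine
    calc ∑ k ∈ Finset.Icc 1 N, t * μ {y | (k : ℝ≥0∞) * t < g y}
        ≤ ∑ k ∈ Finset.Icc 1 N, (t * ulim u (fun n => ν n (D k)) + t * δ) := by
          refine Finset.sum_le_sum fun k _ => ?_
          rw [← mul_add]
          exact mul_le_mul_right (hD2 k) t
      _ = (∑ k ∈ Finset.Icc 1 N, t * ulim u (fun n => ν n (D k)))
            + ∑ _k ∈ Finset.Icc 1 N, t * δ := Finset.sum_add_distrib
      _ ≤ 1 + ε := by
          refine add_le_add hsum1 ?_
          rw [Finset.sum_const, nsmul_eq_mul, Nat.card_Icc]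
          have h1 : t * δ ≤ δ := by
            calc t * δ ≤ 1 * δ := mul_le_mul_left (two_pow_inv_le_one m) δ
              _ = δ := one_mul δ
          calc ((N + 1 - 1 : ℕ) : ℝ≥0∞) * (t * δ) ≤ (N : ℝ≥0∞) * δ := by
                refine mul_le_mul' ?_ h1
                norm_num
            _ ≤ ε := by rw [hδ_def]; exact ENNReal.mul_div_le
  -- Step 2 : Fatou's lemma
  calc ∫⁻ x, g x ∂μ ≤ ∫⁻ x, Filter.liminf (fun m => dyadicSum g m x) Filter.atTop ∂μ :=
        lintegral_mono (le_liminf_dyadicSum g)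
    _ ≤ Filter.liminf (fun m => ∫⁻ x, dyadicSum g m x ∂μ) Filter.atTop :=
        lintegral_liminf_le (measurable_dyadicSum hg)
    _ ≤ 1 := by
        refine le_trans (Filter.liminf_le_liminf (Filter.Eventually.of_forall step1)) ?_
        simp [Filter.liminf_const]

end Stmt16Aux

open Stmt16Aux Filter Topology TopologicalSpace

/-- Fuglede's property (iv): the supremum defining the capacity of a compact set is
attained by an equilibrium measure. -/
theorem stmt16 {X : Type*} [TopologicalSpace X] [T2Space X] [LocallyCompactSpace X]
    [MeasurableSpace X] [BorelSpace X]
    (K : X → X → ℝ≥0∞) (hK : LowerSemicontinuous fun p : X × X => K p.1 p.2)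
    (hKnz : ∀ ζ : X, ∃ z : X, K z ζ ≠ 0)
    (F : Set X) (hF : IsCompact F) :
    ∃ μ : Measure X, μ.InnerRegular ∧ IsLocallyFiniteMeasure μ ∧ μ Fᶜ = 0 ∧
      (∀ z : X, ∫⁻ ζ, K z ζ ∂μ ≤ 1) ∧ μ F = genCapac K F := by
  classical
  have hFc : IsClosed F := hF.isClosed
  have hFm : MeasurableSet F := hFc.measurableSet
  -- lower semicontinuity in the second variable
  have hKlsc : ∀ z : X, LowerSemicontinuous (fun ζ => K z ζ) := by
    intro z
    rw [lowerSemicontinuous_iff_isOpen_preimage]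
    intro y
    have : (fun ζ => K z ζ) ⁻¹' (Set.Ioi y)
        = (fun ζ : X => (z, ζ)) ⁻¹' ((fun p : X × X => K p.1 p.2) ⁻¹' (Set.Ioi y)) := rfl
    rw [this]
    exact (hK.isOpen_preimage y).preimage (Continuous.prodMk_right z)
  have hgen : genCapac K F = ⨆ (μ : Measure X) (_ : μ.InnerRegular ∧ IsLocallyFiniteMeasure μ ∧
      μ Fᶜ = 0 ∧ ∀ z : X, ∫⁻ ζ, K z ζ ∂μ ≤ 1), μ F := rfl
  -- Step 1 : the capacity is finite
  have hCtop : genCapac K F ≠ ⊤ := by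
    have hdata : ∀ ζ : F, ∃ (z : X) (r : ℝ≥0∞), 0 < r ∧ r < K z ζ := by
      intro ζ
      obtain ⟨z, hz⟩ := hKnz ζ
      obtain ⟨r, h0, h1⟩ := exists_between (pos_iff_ne_zero.2 hz)
      exact ⟨z, r, h0, h1⟩
    choose z r hr0 hr1 using hdata
    set V : F → Set X := fun i => {ζ' | r i < K (z i) ζ'} with hV_def
    have hVopen : ∀ i, IsOpen (V i) := fun i => (hKlsc (z i)).isOpen_preimage _
    have hcover : F ⊆ ⋃ i, V i := fun ζ hζ => Set.mem_iUnion.2 ⟨⟨ζ, hζ⟩, hr1 ⟨ζ, hζ⟩⟩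
    obtain ⟨s, hs⟩ := hF.elim_finite_subcover V hVopen hcover
    have hbound : ∀ μ : Measure X, (μ.InnerRegular ∧ IsLocallyFiniteMeasure μ ∧
        μ Fᶜ = 0 ∧ ∀ z : X, ∫⁻ ζ, K z ζ ∂μ ≤ 1) → μ F ≤ ∑ i ∈ s, (r i)⁻¹ := by
      intro μ hμ
      have hVi : ∀ i : F, μ (V i) ≤ (r i)⁻¹ := by
        intro i
        have h1 : r i * μ (V i) ≤ 1 := by
          calc r i * μ (V i) = ∫⁻ _ in V i, r i ∂μ := (setLIntegral_const _ _).symm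
            _ ≤ ∫⁻ ζ in V i, K (z i) ζ ∂μ :=
                setLIntegral_mono ((hKlsc (z i)).measurable) (fun ζ hζ => hζ.le)
            _ ≤ ∫⁻ ζ, K (z i) ζ ∂μ := setLIntegral_le_lintegral _ _
            _ ≤ 1 := hμ.2.2.2 (z i)
        rw [ENNReal.le_inv_iff_mul_le, mul_comm]
        exact h1
      calc μ F ≤ μ (⋃ i ∈ s, V i) := measure_mono hs
        _ ≤ ∑ i ∈ s, μ (V i) := measure_biUnion_finset_le s V
        _ ≤ ∑ i ∈ s, (r i)⁻¹ := Finset.sum_le_sum fun i _ => hVi i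
    have hle : genCapac K F ≤ ∑ i ∈ s, (r i)⁻¹ := by
      rw [hgen]
      exact iSup₂_le hbound
    refine ne_top_of_le_ne_top ?_ hle
    exact (ENNReal.sum_lt_top.2 fun i _ => ENNReal.inv_lt_top.2 (hr0 i)).ne
  -- Step 2 : choose an (almost) maximizing sequence
  have hexists : ∀ n : ℕ, ∃ μ : Measure X, (μ.InnerRegular ∧ IsLocallyFiniteMeasure μ ∧
      μ Fᶜ = 0 ∧ ∀ z : X, ∫⁻ ζ, K z ζ ∂μ ≤ 1) ∧ genCapac K F ≤ μ F + (n : ℝ≥0∞)⁻¹ := by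
    intro n
    rcases le_or_gt (genCapac K F) ((n : ℝ≥0∞)⁻¹) with h | h
    · refine ⟨0, ⟨inferInstance, inferInstance, by simp, fun z => by simp⟩, ?_⟩
      simpa using h
    · have hC0 : genCapac K F ≠ 0 := fun h0 => by simp [h0] at h
      have hsub : genCapac K F - (n : ℝ≥0∞)⁻¹ < genCapac K F := by
        refine ENNReal.sub_lt_self hCtop hC0 ?_
        simp only [ne_eq, ENNReal.inv_eq_zero]
        exact ENNReal.natCast_ne_top n
      rw [hgen] at hsub
      obtain ⟨μ, hμ1⟩ := lt_iSup_iff.1 hsub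
      obtain ⟨hP, hμ2⟩ := lt_iSup_iff.1 hμ1
      rw [← hgen] at hμ2
      exact ⟨μ, hP, tsub_le_iff_right.1 hμ2.le⟩
  choose μs hAdm hnear using hexists
  have hle_cap : ∀ n, μs n F ≤ genCapac K F := by
    intro n
    rw [hgen]
    exact le_iSup₂ (f := fun (μ : Measure X)
      (_ : μ.InnerRegular ∧ IsLocallyFiniteMeasure μ ∧ μ Fᶜ = 0 ∧
        ∀ z : X, ∫⁻ ζ, K z ζ ∂μ ≤ 1) => μ F) (μs n) (hAdm n)
  have hmass : ∀ n (s : Set X), μs n s ≤ genCapac K F := by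
    intro n s
    have h1 : μs n Set.univ = μs n F := by
      have := measure_add_measure_compl (μ := μs n) hFm
      rw [(hAdm n).2.2.1, add_zero] at this
      exact this.symm
    calc μs n s ≤ μs n Set.univ := measure_mono (Set.subset_univ s)
      _ = μs n F := h1
      _ ≤ genCapac K F := hle_cap n
  -- Step 3 : the limit content along an ultrafilter
  set u : Ultrafilter ℕ := Ultrafilter.of atTop with hu_def
  have hu : ↑u ≤ (atTop : Filter ℕ) := Ultrafilter.of_le _
  set ℓ : Compacts X → ℝ≥0∞ := fun D => ulim u (fun n => μs n D) with hℓ_def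
  have hℓ_le : ∀ D, ℓ D ≤ genCapac K F := fun D => ulim_le fun n => hmass n D
  have hℓtop : ∀ D, ℓ D ≠ ⊤ := fun D => ((hℓ_le D).trans_lt hCtop.lt_top).ne
  set Λ : Content X :=
    { toFun := fun D => (ℓ D).toNNReal
      mono' := fun D₁ D₂ h => by
        have h1 : ℓ D₁ ≤ ℓ D₂ := ulim_mono fun n => measure_mono h
        exact ENNReal.toNNReal_mono (hℓtop D₂) h1
      sup_disjoint' := fun D₁ D₂ hd h₁ h₂ => by
        have hadd : ∀ n, μs n ↑(D₁ ⊔ D₂) = μs n D₁ + μs n D₂ := by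
          intro n
          show μs n ((D₁ : Set X) ∪ (D₂ : Set X)) = _
          exact measure_union hd h₂.measurableSet
        have h1 : ℓ (D₁ ⊔ D₂) = ℓ D₁ + ℓ D₂ := by
          refine ulim_eq ?_
          simp only [hadd]
          exact ((tendsto_ulim u _).add (tendsto_ulim u _))
        rw [h1,
          ENNReal.toNNReal_add (hℓtop D₁) (hℓtop D₂)]
      sup_le' := fun D₁ D₂ => by
        have h1 : ℓ (D₁ ⊔ D₂) ≤ ℓ D₁ + ℓ D₂ := by
          have h2 : ∀ n, μs n ↑(D₁ ⊔ D₂) ≤ μs n D₁ + μs n D₂ := by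
            intro n
            exact measure_union_le _ _
          have h3 : ulim u (fun n => μs n D₁ + μs n D₂) = ℓ D₁ + ℓ D₂ :=
            ulim_eq ((tendsto_ulim u _).add (tendsto_ulim u _))
          calc ℓ (D₁ ⊔ D₂) ≤ ulim u (fun n => μs n D₁ + μs n D₂) := ulim_mono h2
            _ = ℓ D₁ + ℓ D₂ := h3
        have h4 : (ℓ (D₁ ⊔ D₂)).toNNReal ≤ (ℓ D₁ + ℓ D₂).toNNReal :=
          ENNReal.toNNReal_mono (by simp [hℓtop D₁, hℓtop D₂]) h1
        rwa [ENNReal.toNNReal_add (hℓtop D₁) (hℓtop D₂)] at h4 } with hΛ_def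
  have hΛcoe : ∀ D : Compacts X, (Λ D : ℝ≥0∞) = ℓ D := by
    intro D
    show ((Λ.toFun D : ℝ≥0) : ℝ≥0∞) = ℓ D
    rw [hΛ_def]
    exact ENNReal.coe_toNNReal (hℓtop D)
  set μ : Measure X := Λ.measure with hμ_def
  -- the measure of open sets
  have hopen : ∀ U : Set X, IsOpen U →
      μ U = ⨆ (D : Compacts X) (_ : (D : Set X) ⊆ U), ulim u (fun n => μs n D) := by
    intro U hU
    rw [hμ_def, Λ.measure_apply hU.measurableSet, Λ.outerMeasure_of_isOpen U hU]
    show ⨆ (D : Compacts X) (_ : (D : Set X) ⊆ U), (Λ D : ℝ≥0∞) = _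
    exact iSup_congr fun D => iSup_congr fun _ => hΛcoe D
  -- μ is finite
  haveI hfin : IsFiniteMeasure μ := by
    constructor
    rw [hopen Set.univ isOpen_univ]
    refine lt_of_le_of_lt (iSup₂_le fun D _ => hℓ_le D) hCtop.lt_top
  haveI : μ.InnerRegular := by infer_instance
  -- supported in F
  have hFcomp : μ Fᶜ = 0 := by
    rw [hopen Fᶜ hFc.isOpen_compl]
    refine le_antisymm (iSup₂_le fun D hD => ?_) (zero_le)
    have : ∀ n, μs n D = 0 := by
      intro n
      refine le_antisymm ?_ (zero_le)
      calc μs n D ≤ μs n Fᶜ := measure_mono hD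
        _ = 0 := (hAdm n).2.2.1
    rw [ulim_zero this]
  -- potential bound
  have hpot : ∀ z : X, ∫⁻ ζ, K z ζ ∂μ ≤ 1 := by
    intro z
    exact potential_bound μ μs u hopen (fun ζ => K z ζ) (hKlsc z)
      (fun n => (hAdm n).2.2.2 z)
  -- total mass equals the capacity
  have hμF : μ F = genCapac K F := by
    refine le_antisymm ?_ ?_
    · calc μ F ≤ μ Set.univ := measure_mono (Set.subset_univ F)
        _ ≤ genCapac K F := by
            rw [hopen Set.univ isOpen_univ]
            exact iSup₂_le fun D _ => hℓ_le D
    · have h1 : ℓ ⟨F, hF⟩ ≤ μ F := by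
        rw [hμ_def, Λ.measure_apply hFm]
        calc ℓ ⟨F, hF⟩ = (Λ ⟨F, hF⟩ : ℝ≥0∞) := (hΛcoe _).symm
          _ ≤ Λ.outerMeasure F := Λ.le_outerMeasure_compacts ⟨F, hF⟩
      refine le_trans ?_ h1
      -- genCapac K F ≤ ℓ ⟨F, hF⟩
      have hinv : Filter.Tendsto (fun n : ℕ => (n : ℝ≥0∞)⁻¹) ↑u (𝓝 0) :=
        ENNReal.tendsto_inv_nat_nhds_zero.mono_left hu
      have h2 : Filter.Tendsto (fun n => μs n F + (n : ℝ≥0∞)⁻¹) ↑u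
          (𝓝 (ℓ ⟨F, hF⟩ + 0)) := (tendsto_ulim u _).add hinv
      have h3 : genCapac K F ≤ ℓ ⟨F, hF⟩ + 0 :=
        le_of_tendsto_of_tendsto' tendsto_const_nhds h2 hnear
      simpa using h3
  exact ⟨μ, inferInstance, inferInstance, hFcomp, hpot, hμF⟩

end
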